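/- Let G be a graph and G₀ = ({v}, ∅) a single isolated vertex, and Ḡ = G ⊎ G₀ their disjoint union. In any rooted binary tree layout (T̄, φ̄) of Ḡ of minimum tree length, the leaf φ̄(v) is a child of the root of T̄. -/

import Mathlib

open SimpleGraph
open scoped Classical

/-- The sum of dilations of the edges of `H` under the embedding `φ` into the tree `T`. -/
noncomputable def treeLength {V W : Type*} [Fintype V] [Fintype W]
    (H : SimpleGraph V) (T : SimpleGraph W) (φ : V → W) : ℕ :=
  ∑ e ∈ H.edgeFinset, Sym2.lift ⟨fun u v => T.dist (φ u) (φ v),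
    fun _ _ => T.dist_comm⟩ e

/-- `(T, r, φ)` is a rooted binary tree layout: `T` is a tree, the root `r` has degree 2,
every other vertex is a leaf or has degree 3 (i.e. every non-root internal node has
exactly 2 children), and `φ` is a bijection onto the leaves of `T`. -/
def IsRootedBinaryLayout {V W : Type*} [Fintype W]
    (T : SimpleGraph W) (r : W) (φ : V → W) : Prop :=
  T.IsTree ∧ T.degree r = 2 ∧ (∀ w : W, w ≠ r → T.degree w = 1 ∨ T.degree w = 3) ∧
    Set.BijOn φ Set.univ {w : W | T.degree w = 1}

/-- The disjoint union of `G` with a single isolated vertex `none`. -/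
def addIsolated {V : Type*} (G : SimpleGraph V) : SimpleGraph (Option V) :=
  SimpleGraph.fromRel (fun a b => ∃ x y, a = some x ∧ b = some y ∧ G.Adj x y)

namespace IsoLeaf

variable {W : Type*} {T T' : SimpleGraph W}

lemma dist_add_dist_le_length {a b v : W} (Wk : T.Walk a b) (hv : v ∈ Wk.support) :
    T.dist a v + T.dist v b ≤ Wk.length := by
  have hspec := Wk.take_spec hv
  have hlen := congrArg SimpleGraph.Walk.length hspec
  rw [SimpleGraph.Walk.length_append] at hlen
  calc T.dist a v + T.dist v b
      ≤ (Wk.takeUntil v hv).length + (Wk.dropUntil v hv).length :=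
        Nat.add_le_add (SimpleGraph.dist_le _) (SimpleGraph.dist_le _)
    _ = Wk.length := hlen

lemma isPath_of_length_eq_dist (hc : T.Connected) {a b : W} (Wk : T.Walk a b)
    (h : Wk.length = T.dist a b) : Wk.IsPath := by
  induction Wk with
  | nil => exact SimpleGraph.Walk.IsPath.nil
  | @cons x z y hadj W ih =>
    rw [SimpleGraph.Walk.length_cons] at h
    have h1 : T.dist z y ≤ W.length := SimpleGraph.dist_le W
    have h2 : T.dist x y ≤ T.dist x z + T.dist z y := hc.dist_triangle
    have h3 : T.dist x z ≤ 1 := by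
      have := SimpleGraph.dist_le (SimpleGraph.Walk.cons hadj SimpleGraph.Walk.nil)
      simpa using this
    have hW : W.length = T.dist z y := by omega
    refine (SimpleGraph.Walk.cons_isPath_iff _ _).2 ⟨ih hW, fun hx => ?_⟩
    have h4 : T.dist z x + T.dist x y ≤ W.length := dist_add_dist_le_length W hx
    omega

lemma shortest_walk (hc : T.Connected) (a b : W) :
    ∃ Wk : T.Walk a b, Wk.length = T.dist a b :=
  (hc.preconnected a b).exists_walk_length_eq_dist

/-- In a tree, distances to a fixed vertex change by exactly 1 along an edge. -/
lemma adj_dist_cases (hT : T.IsTree) (a : W) {u w : W} (h : T.Adj u w) :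
    T.dist a w = T.dist a u + 1 ∨ T.dist a u = T.dist a w + 1 := by
  have hc := hT.isConnected
  have huw : T.dist u w = 1 := SimpleGraph.dist_eq_one_iff_adj.2 h
  have hwu : T.dist w u = 1 := SimpleGraph.dist_eq_one_iff_adj.2 h.symm
  have t1 : T.dist a w ≤ T.dist a u + 1 := by
    have := hc.dist_triangle (u := a) (v := u) (w := w); omega
  have t2 : T.dist a u ≤ T.dist a w + 1 := by
    have := hc.dist_triangle (u := a) (v := w) (w := u); omega
  by_contra hcon
  push_neg at hcon
  have hk : T.dist a u = T.dist a w := by omega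
  obtain ⟨Ww, hWw⟩ := shortest_walk hc w a
  obtain ⟨Wu, hWu⟩ := shortest_walk hc u a
  have hWwpath : Ww.IsPath := isPath_of_length_eq_dist hc Ww hWw
  have hWupath : Wu.IsPath := isPath_of_length_eq_dist hc Wu hWu
  have hus : u ∉ Ww.support := by
    intro hmem
    have := dist_add_dist_le_length Ww hmem
    have hz : T.dist w u = 0 := by
      have hcm : T.dist u a = T.dist a u := SimpleGraph.dist_comm ..
      have hcm2 : T.dist w a = T.dist a w := SimpleGraph.dist_comm ..
      omega
    exact h.ne' ((hc.dist_eq_zero_iff).1 hz)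
  have hpath1 : (SimpleGraph.Walk.cons h Ww).IsPath := hWwpath.cons hus
  have heq := (hT.existsUnique_path u a).unique hpath1 hWupath
  have hlen := congrArg SimpleGraph.Walk.length heq
  rw [SimpleGraph.Walk.length_cons] at hlen
  have hcm : T.dist u a = T.dist a u := SimpleGraph.dist_comm ..
  have hcm2 : T.dist w a = T.dist a w := SimpleGraph.dist_comm ..
  omega

/-- uniqueness of the neighbor of `p` in the direction of `w`. -/
lemma dir_unique (hT : T.IsTree) {p w n n' : W} (hn : T.Adj p n) (hn' : T.Adj p n')
    (hd : T.dist p w = 1 + T.dist n w) (hd' : T.dist p w = 1 + T.dist n' w) : n = n' := by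
  have hc := hT.isConnected
  obtain ⟨Wn, hWn⟩ := shortest_walk hc n w
  obtain ⟨Wn', hWn'⟩ := shortest_walk hc n' w
  have h1 : (SimpleGraph.Walk.cons hn Wn).length = T.dist p w := by
    rw [SimpleGraph.Walk.length_cons]; omega
  have h2 : (SimpleGraph.Walk.cons hn' Wn').length = T.dist p w := by
    rw [SimpleGraph.Walk.length_cons]; omega
  have p1 := isPath_of_length_eq_dist hc _ h1
  have p2 := isPath_of_length_eq_dist hc _ h2
  have heq := (hT.existsUnique_path p w).unique p1 p2
  have := congrArg (fun (Wk : T.Walk p w) => Wk.getVert 1) heq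
  simpa [SimpleGraph.Walk.getVert_cons] using this

lemma dir_exists (hc : T.Connected) {p w : W} (hne : p ≠ w) :
    ∃ n, T.Adj p n ∧ T.dist p w = 1 + T.dist n w := by
  obtain ⟨Wk, hWk⟩ := shortest_walk hc p w
  cases Wk with
  | nil => exact absurd rfl hne
  | @cons x z y hadj Wk' =>
    refine ⟨z, hadj, ?_⟩
    rw [SimpleGraph.Walk.length_cons] at hWk
    have h1 : T.dist z w ≤ Wk'.length := SimpleGraph.dist_le Wk'
    have h2 : T.dist p w ≤ T.dist p z + T.dist z w := hc.dist_triangle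
    have h3 : T.dist p z ≤ 1 := by
      have := SimpleGraph.dist_le (SimpleGraph.Walk.cons hadj SimpleGraph.Walk.nil)
      simpa using this
    omega

lemma dir_up (hT : T.IsTree) {p n a b : W} (hab : T.Adj a b) (hn : T.Adj p n)
    (hup : T.dist p b = T.dist p a + 1)
    (hda : T.dist p a = 1 + T.dist n a) : T.dist p b = 1 + T.dist n b := by
  have hc := hT.isConnected
  have h1 : T.dist n b ≤ T.dist n a + 1 := by
    have := hc.dist_triangle (u := n) (v := a) (w := b)
    have := SimpleGraph.dist_eq_one_iff_adj.2 hab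
    omega
  have h2 : T.dist p b ≤ 1 + T.dist n b := by
    have := hc.dist_triangle (u := p) (v := n) (w := b)
    have := SimpleGraph.dist_eq_one_iff_adj.2 hn
    omega
  omega

lemma dir_step (hT : T.IsTree) {p n a b : W} (hb : b ≠ p) (hab : T.Adj a b) (hn : T.Adj p n)
    (hda : T.dist p a = 1 + T.dist n a) : T.dist p b = 1 + T.dist n b := by
  rcases adj_dist_cases hT p hab with hup | hdown
  · exact dir_up hT hab hn hup hda
  · obtain ⟨n', hn', hd'⟩ := dir_exists hT.isConnected (Ne.symm hb)
    have hda' : T.dist p a = 1 + T.dist n' a := dir_up hT hab.symm hn' hdown hd'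
    have : n = n' := dir_unique hT hn hn' hda hda'
    rw [this]; exact hd'

lemma dir_walk (hT : T.IsTree) {p n a b : W} (Wk : T.Walk a b) (hp : p ∉ Wk.support)
    (hn : T.Adj p n) (hda : T.dist p a = 1 + T.dist n a) :
    T.dist p b = 1 + T.dist n b := by
  induction Wk with
  | nil => exact hda
  | @cons x z y hadj Wk' ih =>
    rw [SimpleGraph.Walk.support_cons] at hp
    have hp' : p ∉ Wk'.support := fun hmem => hp (List.mem_cons_of_mem _ hmem)
    have hz : z ≠ p := fun e => hp' (e ▸ Wk'.start_mem_support)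
    exact ih hp' (dir_step hT hz hadj hn hda)

/-- In a finite tree whose vertices all have degree 1 or ≥ 2, beyond any edge there is a leaf. -/
lemma exists_leaf_dir [Fintype W] (hT : T.IsTree)
    (hdeg : ∀ w : W, T.degree w ≠ 1 → 2 ≤ T.degree w) {a b : W} (hab : T.Adj a b) :
    ∃ u, T.degree u = 1 ∧ T.dist a u = 1 + T.dist b u := by
  have hc := hT.isConnected
  set D := Finset.univ.filter (fun w => T.dist a w = 1 + T.dist b w) with hD
  have hbD : b ∈ D := by
    simp only [hD, Finset.mem_filter, Finset.mem_univ, true_and]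
    rw [SimpleGraph.dist_eq_one_iff_adj.2 hab]
    simp [hc.dist_eq_zero_iff.2 rfl]
  obtain ⟨u, huD, hmax⟩ := D.exists_max_image (fun w => T.dist a w) ⟨b, hbD⟩
  have hud : T.dist a u = 1 + T.dist b u := by
    simpa [hD] using huD
  by_cases hdu : T.degree u = 1
  · exact ⟨u, hdu, hud⟩
  exfalso
  have h2 : 2 ≤ T.degree u := hdeg u hdu
  rw [← SimpleGraph.card_neighborFinset_eq_degree] at h2
  obtain ⟨w₁, hw₁, w₂, hw₂, hne⟩ :=
    Finset.one_lt_card.mp (show 1 < (T.neighborFinset u).card by omega)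
  rw [SimpleGraph.mem_neighborFinset] at hw₁ hw₂
  have hua : T.dist a u ≠ 0 := by omega
  have key : ∃ w, T.Adj u w ∧ T.dist a w = T.dist a u + 1 := by
    rcases adj_dist_cases hT a hw₁ with h1 | h1
    · exact ⟨w₁, hw₁, h1⟩
    rcases adj_dist_cases hT a hw₂ with h2' | h2'
    · exact ⟨w₂, hw₂, h2'⟩
    exfalso
    have hd1 : T.dist u a = 1 + T.dist w₁ a := by
      rw [SimpleGraph.dist_comm, SimpleGraph.dist_comm (u := w₁)]; omega
    have hd2 : T.dist u a = 1 + T.dist w₂ a := by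
      rw [SimpleGraph.dist_comm, SimpleGraph.dist_comm (u := w₂)]; omega
    exact hne (dir_unique hT hw₁ hw₂ hd1 hd2)
  obtain ⟨w, huw, hwfar⟩ := key
  have hwD : w ∈ D := by
    simp only [hD, Finset.mem_filter, Finset.mem_univ, true_and]
    have t1 : T.dist a w ≤ T.dist a b + T.dist b w := hc.dist_triangle
    have t2 : T.dist b w ≤ T.dist b u + T.dist u w := hc.dist_triangle
    have e1 : T.dist a b = 1 := SimpleGraph.dist_eq_one_iff_adj.2 hab
    have e2 : T.dist u w = 1 := SimpleGraph.dist_eq_one_iff_adj.2 huw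
    omega
  have := hmax w hwD
  omega

/-- A connected finite graph has at least `card W - 1` edges. -/
lemma card_le_card_edgeFinset_add_one [Fintype W] [Fintype T.edgeSet] (hc : T.Connected) :
    Fintype.card W ≤ T.edgeFinset.card + 1 := by
  obtain ⟨d⟩ := hc.nonempty
  have step : ∀ v : W, v ≠ d → ∃ z, T.Adj v z ∧ T.dist v d = 1 + T.dist z d :=
    fun v hv => dir_exists hc hv
  choose! z hz1 hz2 using step
  have hmaps : ∀ v ∈ Finset.univ.erase d, s(v, z v) ∈ T.edgeFinset := by
    intro v hv
    rw [SimpleGraph.mem_edgeFinset, SimpleGraph.mem_edgeSet]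
    exact hz1 v (Finset.ne_of_mem_erase hv)
  have hinj : Set.InjOn (fun v => s(v, z v)) (Finset.univ.erase d) := by
    intro v₁ hv₁ v₂ hv₂ heq
    simp only [Finset.coe_erase, Set.mem_diff, Finset.coe_univ] at hv₁ hv₂
    have h₁ : v₁ ≠ d := by simpa using hv₁.2
    have h₂ : v₂ ≠ d := by simpa using hv₂.2
    simp only [Sym2.eq_iff] at heq
    rcases heq with ⟨h, _⟩ | ⟨ha, hb⟩
    · exact h
    · exfalso
      have e1 := hz2 v₁ h₁
      have e2 := hz2 v₂ h₂
      rw [← ha, ← hb] at e2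
      omega
  have hcard := Finset.card_le_card_of_injOn _ hmaps hinj
  rw [Finset.card_erase_of_mem (Finset.mem_univ d), Finset.card_univ] at hcard
  omega

/-- A connected graph with `card W - 1` edges is a tree. -/
lemma isTree_of_card [Fintype W] [Fintype T.edgeSet] (hc : T.Connected)
    (hcard : T.edgeFinset.card + 1 = Fintype.card W) : T.IsTree := by
  refine ⟨hc, ?_⟩
  intro v c hcyc
  cases c with
  | nil => exact hcyc.ne_nil rfl
  | @cons _ z _ hadj Wk' =>
    have hmem : s(v, z) ∈ (SimpleGraph.Walk.cons hadj Wk').edges := by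
      rw [SimpleGraph.Walk.edges_cons]; exact List.mem_cons_self
    have hnb : ¬ T.IsBridge s(v, z) := by
      rw [SimpleGraph.isBridge_iff_adj_and_forall_cycle_notMem]
      push_neg
      exact ⟨v, SimpleGraph.Walk.cons hadj Wk', hcyc, hmem⟩
      exact hadj
    rw [SimpleGraph.isBridge_iff] at hnb
    push_neg at hnb
    have hreach : (T \ SimpleGraph.fromEdgeSet {s(v, z)}).Reachable v z := hnb
    set T₂ := T \ SimpleGraph.fromEdgeSet {s(v, z)} with hT₂
    have haux : ∀ {a b : W}, T.Walk a b → T₂.Reachable a b := by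
      intro a b Wab
      induction Wab with
      | nil => exact SimpleGraph.Reachable.refl _
      | @cons a' z' b' hadj' W' ih =>
        refine SimpleGraph.Reachable.trans ?_ ih
        by_cases he : s(a', z') = s(v, z)
        · rw [Sym2.eq_iff] at he
          rcases he with ⟨rfl, rfl⟩ | ⟨rfl, rfl⟩
          · exact hreach
          · exact hreach.symm
        · refine SimpleGraph.Adj.reachable ?_
          rw [hT₂, SimpleGraph.sdiff_adj]
          refine ⟨hadj', ?_⟩
          rw [SimpleGraph.fromEdgeSet_adj]
          rintro ⟨hmem', -⟩
          exact he (Set.mem_singleton_iff.mp hmem')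
    have hconn₂ : T₂.Connected := by
      rw [SimpleGraph.connected_iff]
      refine ⟨fun a b => ?_, ⟨v⟩⟩
      obtain ⟨Wab⟩ := hc.preconnected a b
      exact haux Wab
    have hE₂ : T₂.edgeFinset = T.edgeFinset.erase s(v, z) := by
      ext e
      induction e with
      | _ a b =>
        simp only [SimpleGraph.mem_edgeFinset, Finset.mem_erase, SimpleGraph.mem_edgeSet,
          hT₂, SimpleGraph.sdiff_adj, SimpleGraph.fromEdgeSet_adj, Set.mem_singleton_iff]
        constructor
        · rintro ⟨hadj', hne⟩
          exact ⟨fun he => hne ⟨he, hadj'.ne⟩, hadj'⟩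
        · rintro ⟨hne, hadj'⟩
          exact ⟨hadj', fun ⟨he, _⟩ => hne he⟩
    have hedge : s(v, z) ∈ T.edgeFinset := by
      rw [SimpleGraph.mem_edgeFinset, SimpleGraph.mem_edgeSet]; exact hadj
    have h1 : 1 ≤ T.edgeFinset.card := Finset.card_pos.2 ⟨_, hedge⟩
    have := card_le_card_edgeFinset_add_one hconn₂
    rw [hE₂, Finset.card_erase_of_mem hedge] at this
    omega

/-- Walk surgery: turning `T`-walks into `T'`-walks avoiding the collapsed vertex `p`. -/
lemma walk_surgery (p l q c : W)
    (hnf : ∀ z, T.Adj p z ↔ z = l ∨ z = q ∨ z = c)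
    (hlnf : ∀ z, T.Adj l z ↔ z = p)
    (hT'1 : ∀ x z, T.Adj x z → x ≠ p → z ≠ p → T'.Adj x z)
    (hT'2 : T'.Adj q c) (hql : q ≠ l) (hcl : c ≠ l) :
    ∀ n {x y : W} (Wk : T.Walk x y), Wk.length = n → x ≠ p → x ≠ l → y ≠ p → y ≠ l →
    ∃ Wk' : T'.Walk x y, Wk'.length ≤ n ∧ (p ∈ Wk.support → Wk'.length < n) := by
  intro n
  induction n using Nat.strong_induction_on with
  | _ n ih =>
  intro x y Wk hlen hxp hxl hyp hyl
  cases Wk with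
  | nil =>
    refine ⟨SimpleGraph.Walk.nil, by simp [← hlen], fun hp => ?_⟩
    simp only [SimpleGraph.Walk.support_nil, List.mem_singleton] at hp
    exact absurd hp.symm hxp
  | @cons _ z _ h W1 =>
    rw [SimpleGraph.Walk.length_cons] at hlen
    by_cases hzp : p = z
    · subst hzp
      have hx_mem : x = l ∨ x = q ∨ x = c := (hnf x).1 h.symm
      have hxqc : x = q ∨ x = c := by
        rcases hx_mem with h' | h' | h'
        · exact absurd h' hxl
        · exact Or.inl h'
        · exact Or.inr h'
      cases W1 with
      | nil => exact absurd rfl hyp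
      | @cons _ z₂ _ h2 W2 =>
        rw [SimpleGraph.Walk.length_cons] at hlen
        have hz₂_mem : z₂ = l ∨ z₂ = q ∨ z₂ = c := (hnf z₂).1 h2
        rcases hz₂_mem with rfl | hz₂qc
        · cases W2 with
          | nil => exact absurd rfl hyl
          | @cons _ z₃ _ h3 W3 =>
            rw [SimpleGraph.Walk.length_cons] at hlen
            have hz₃ : z₃ = p := (hlnf z₃).1 h3
            subst hz₃
            have hlt : W3.length + 1 < n := by omega
            obtain ⟨Wk', hle, _⟩ :=
              ih (W3.length + 1) hlt (SimpleGraph.Walk.cons h W3) rfl hxp hxl hyp hyl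
            exact ⟨Wk', by omega, fun _ => by omega⟩
        · have hz₂p : z₂ ≠ p := by
            rcases hz₂qc with rfl | rfl
            · exact ((hnf z₂).2 (Or.inr (Or.inl rfl))).ne'
            · exact ((hnf z₂).2 (Or.inr (Or.inr rfl))).ne'
          have hz₂l : z₂ ≠ l := by
            rcases hz₂qc with rfl | rfl
            · exact hql
            · exact hcl
          by_cases hxz : x = z₂
          · subst hxz
            have hlt : W2.length < n := by omega
            obtain ⟨Wk', hle, _⟩ := ih W2.length hlt W2 rfl hz₂p hz₂l hyp hyl
            exact ⟨Wk', by omega, fun _ => by omega⟩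
          · have hadj' : T'.Adj x z₂ := by
              rcases hxqc with rfl | rfl
              · rcases hz₂qc with rfl | rfl
                · exact absurd rfl hxz
                · exact hT'2
              · rcases hz₂qc with rfl | rfl
                · exact hT'2.symm
                · exact absurd rfl hxz
            have hlt : W2.length < n := by omega
            obtain ⟨Wk₂', hle, _⟩ := ih W2.length hlt W2 rfl hz₂p hz₂l hyp hyl
            refine ⟨SimpleGraph.Walk.cons hadj' Wk₂', ?_, fun _ => ?_⟩
            · rw [SimpleGraph.Walk.length_cons]; omega
            · rw [SimpleGraph.Walk.length_cons]; omega
    · have hzp' : z ≠ p := fun e => hzp e.symm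
      have hzl : z ≠ l := by
        intro e
        subst e
        exact hxp ((hlnf x).1 h.symm)
      have hadj' : T'.Adj x z := hT'1 x z h hxp hzp'
      have hlt : W1.length < n := by omega
      obtain ⟨Wk₂', hle, hstrict⟩ := ih W1.length hlt W1 rfl hzp' hzl hyp hyl
      refine ⟨SimpleGraph.Walk.cons hadj' Wk₂', ?_, fun hp => ?_⟩
      · rw [SimpleGraph.Walk.length_cons]; omega
      · rw [SimpleGraph.Walk.support_cons] at hp
        rcases List.mem_cons.mp hp with e | hp'
        · exact absurd e.symm hxp
        · have := hstrict hp'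
          rw [SimpleGraph.Walk.length_cons]; omega

lemma new_tree_adj (T : SimpleGraph W) (p q c r : W) :
    ∀ x z, ((T \ SimpleGraph.fromEdgeSet {s(p,q), s(p,c)}) ⊔
      SimpleGraph.fromEdgeSet {s(q,c), s(p,r)}).Adj x z ↔
      ((T.Adj x z ∧ ¬(s(x,z) = s(p,q) ∨ s(x,z) = s(p,c))) ∨
       ((s(x,z) = s(q,c) ∨ s(x,z) = s(p,r)) ∧ x ≠ z)) := by
  intro x z
  have hne : T.Adj x z → x ≠ z := SimpleGraph.Adj.ne
  simp only [SimpleGraph.sup_adj, SimpleGraph.sdiff_adj, SimpleGraph.fromEdgeSet_adj,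
    Set.mem_insert_iff, Set.mem_singleton_iff]
  tauto

end IsoLeaf

set_option maxHeartbeats 1000000 in
/-- In any minimum-tree-length rooted binary tree layout of `G ⊎ {v}` (with `v` an
isolated vertex), the leaf corresponding to `v` is a child of the root. -/
theorem isolated_leaf_adj_root {V : Type*} [Fintype V]
    (G : SimpleGraph V) (hG : G.Connected) (hE : G.edgeSet.Nonempty)
    (T : SimpleGraph (Fin (2 * Fintype.card (Option V) - 1)))
    (r : Fin (2 * Fintype.card (Option V) - 1))
    (φ : Option V → Fin (2 * Fintype.card (Option V) - 1))
    (hlayout : IsRootedBinaryLayout T r φ)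
    (hmin : ∀ (T' : SimpleGraph (Fin (2 * Fintype.card (Option V) - 1)))
      (r' : Fin (2 * Fintype.card (Option V) - 1))
      (φ' : Option V → Fin (2 * Fintype.card (Option V) - 1)),
      IsRootedBinaryLayout T' r' φ' →
      treeLength (addIsolated G) T φ ≤ treeLength (addIsolated G) T' φ') :
    T.Adj (φ none) r := by
  classical
  by_contra hadj
  obtain ⟨hT, hdegr, hdegs, hbij⟩ := hlayout
  have hc := hT.isConnected
  obtain ⟨l, hl⟩ : ∃ w, w = φ none := ⟨φ none, rfl⟩
  rw [← hl] at hadj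
  -- l is a leaf
  have hldeg : T.degree l = 1 := by rw [hl]; exact hbij.mapsTo (Set.mem_univ none)
  have hnfl_card : (T.neighborFinset l).card = 1 := by
    rw [SimpleGraph.card_neighborFinset_eq_degree]; exact hldeg
  obtain ⟨p, hnfl⟩ := Finset.card_eq_one.mp hnfl_card
  have hlnf : ∀ z, T.Adj l z ↔ z = p := by
    intro z
    rw [← SimpleGraph.mem_neighborFinset, hnfl, Finset.mem_singleton]
  have hlp : T.Adj l p := (hlnf p).2 rfl
  have hlr : l ≠ r := by
    intro e; rw [e] at hldeg; omega
  have hpr : p ≠ r := fun e => hadj (e ▸ hlp)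
  have hpl : p ≠ l := hlp.ne'
  -- p has degree 3
  have hdegp : T.degree p = 3 := by
    rcases hdegs p hpr with h1 | h3
    · exfalso
      have hnfp : T.neighborFinset p = {l} := by
        have hnfp_card1 : (T.neighborFinset p).card = 1 := by
          rw [SimpleGraph.card_neighborFinset_eq_degree]; exact h1
        obtain ⟨z0, hz0⟩ := Finset.card_eq_one.mp hnfp_card1
        have hml : l ∈ T.neighborFinset p := (SimpleGraph.mem_neighborFinset ..).2 hlp.symm
        rw [hz0, Finset.mem_singleton] at hml
        rw [hz0, hml]
      have hpnf : ∀ z, T.Adj p z ↔ z = l := by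
        intro z
        rw [← SimpleGraph.mem_neighborFinset, hnfp, Finset.mem_singleton]
      obtain ⟨Wk, hWk⟩ := IsoLeaf.shortest_walk hc p r
      cases Wk with
      | nil => exact hpr rfl
      | @cons _ z _ h1' W1 =>
        have hz : z = l := (hpnf z).1 h1'
        subst hz
        cases W1 with
        | nil => exact hlr rfl
        | @cons _ z₂ _ h2' W2 =>
          have hz₂ : z₂ = p := (hlnf z₂).1 h2'
          subst hz₂
          have hd := SimpleGraph.dist_le W2
          rw [SimpleGraph.Walk.length_cons, SimpleGraph.Walk.length_cons] at hWk
          omega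
    · exact h3
  -- the neighbor of p towards r
  obtain ⟨q, hpq, hdq⟩ := IsoLeaf.dir_exists hc hpr
  have hqp : q ≠ p := hpq.ne'
  have hql : q ≠ l := by
    intro e
    obtain ⟨n, hn, hd⟩ := IsoLeaf.dir_exists hc (show l ≠ r from hlr)
    have hnp : n = p := (hlnf n).1 hn
    rw [hnp] at hd
    rw [e] at hdq
    omega
  -- the third neighbor c of p
  have hlq_sub : ({l, q} : Finset _) ⊆ T.neighborFinset p := by
    intro z hz
    rw [Finset.mem_insert, Finset.mem_singleton] at hz
    rcases hz with rfl | rfl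
    · exact (SimpleGraph.mem_neighborFinset ..).2 hlp.symm
    · exact (SimpleGraph.mem_neighborFinset ..).2 hpq
  have hlq_card : ({l, q} : Finset (Fin (2 * Fintype.card (Option V) - 1))).card = 2 := by
    rw [Finset.card_insert_of_notMem (by simpa using hql.symm), Finset.card_singleton]
  have hnfp_card : (T.neighborFinset p).card = 3 := by
    rw [SimpleGraph.card_neighborFinset_eq_degree]; exact hdegp
  have hsd : (T.neighborFinset p \ {l, q}).Nonempty := by
    rw [← Finset.card_pos, Finset.card_sdiff_of_subset hlq_sub, hnfp_card, hlq_card]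
    omega
  obtain ⟨c, hcmem⟩ := hsd
  rw [Finset.mem_sdiff, SimpleGraph.mem_neighborFinset, Finset.mem_insert,
    Finset.mem_singleton] at hcmem
  obtain ⟨hpc, hclq⟩ := hcmem
  push_neg at hclq
  obtain ⟨hcl, hcq⟩ := hclq
  have hcp : c ≠ p := hpc.ne'
  have hnfp_eq : T.neighborFinset p = {l, q, c} := by
    have hsub : ({l, q, c} : Finset _) ⊆ T.neighborFinset p := by
      intro z hz
      simp only [Finset.mem_insert, Finset.mem_singleton] at hz
      rcases hz with rfl | rfl | rfl
      · exact (SimpleGraph.mem_neighborFinset ..).2 hlp.symm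
      · exact (SimpleGraph.mem_neighborFinset ..).2 hpq
      · exact (SimpleGraph.mem_neighborFinset ..).2 hpc
    have hcard3 : ({l, q, c} : Finset (Fin (2 * Fintype.card (Option V) - 1))).card = 3 := by
      rw [Finset.card_insert_of_notMem, Finset.card_insert_of_notMem, Finset.card_singleton]
      · simpa using hcq.symm
      · simp only [Finset.mem_insert, Finset.mem_singleton]
        push_neg
        exact ⟨hql.symm, hcl.symm⟩
    exact (Finset.eq_of_subset_of_card_le hsub (by omega)).symm
  have hnf : ∀ z, T.Adj p z ↔ z = l ∨ z = q ∨ z = c := by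
    intro z
    rw [← SimpleGraph.mem_neighborFinset, hnfp_eq]
    simp
  have hcr : c ≠ r := by
    intro e
    have h1 : T.dist p r = 1 := SimpleGraph.dist_eq_one_iff_adj.2 (e ▸ hpc)
    have h0 : T.dist q r = 0 := by omega
    have : q = r := hc.dist_eq_zero_iff.1 h0
    exact hcq (by rw [e, this])
  -- q and c are not adjacent in T
  have hqc_nadj : ¬ T.Adj q c := by
    intro h'
    have hp1 : (SimpleGraph.Walk.cons h' SimpleGraph.Walk.nil).IsPath := by
      simp [SimpleGraph.Walk.cons_isPath_iff, Ne.symm hcq]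
    have hp2 : (SimpleGraph.Walk.cons hpq.symm
        (SimpleGraph.Walk.cons hpc SimpleGraph.Walk.nil)).IsPath := by
      simp [SimpleGraph.Walk.cons_isPath_iff, hqp, Ne.symm hcq, Ne.symm hcp]
    have heq := (hT.existsUnique_path q c).unique hp1 hp2
    have := congrArg SimpleGraph.Walk.length heq
    simp at this
  -- p and r are not adjacent in T unless q = r
  have hpr_nadj : q ≠ r → ¬ T.Adj p r := by
    intro hqr h'
    rcases (hnf r).1 h' with e | e | e
    · exact hlr e.symm
    · exact hqr e.symm
    · exact hcr e.symm
  -- the new tree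
  obtain ⟨T2, hT2def⟩ : ∃ T2, T2 = (T \ SimpleGraph.fromEdgeSet {s(p,q), s(p,c)}) ⊔
    SimpleGraph.fromEdgeSet {s(q,c), s(p,r)} := ⟨_, rfl⟩
  have hT2adj : ∀ x z, T2.Adj x z ↔
      ((T.Adj x z ∧ ¬(s(x,z) = s(p,q) ∨ s(x,z) = s(p,c))) ∨
       ((s(x,z) = s(q,c) ∨ s(x,z) = s(p,r)) ∧ x ≠ z)) := by
    rw [hT2def]
    exact IsoLeaf.new_tree_adj T p q c r
  have hT'1 : ∀ x z, T.Adj x z → x ≠ p → z ≠ p → T2.Adj x z := by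
    intro x z h hx hz
    rw [hT2adj]
    left
    refine ⟨h, ?_⟩
    rintro (he | he) <;> rw [Sym2.eq_iff] at he <;>
      rcases he with ⟨e1, e2⟩ | ⟨e1, e2⟩ <;> first | exact hx e1 | exact hz e2
  have hT'qc : T2.Adj q c := by
    rw [hT2adj]; right; exact ⟨Or.inl rfl, hcq.symm⟩
  have hT'pr : T2.Adj p r := by
    rw [hT2adj]; right; exact ⟨Or.inr rfl, hpr⟩
  have hT'pl : T2.Adj p l := by
    rw [hT2adj]
    left
    refine ⟨hlp.symm, ?_⟩
    rintro (he | he) <;> rw [Sym2.eq_iff] at he <;>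
      rcases he with ⟨e1, e2⟩ | ⟨e1, e2⟩
    · exact hql e2.symm
    · exact hqp e1.symm
    · exact hcl e2.symm
    · exact hcp e1.symm
  -- neighborhoods in T2
  have hT2nfp : T2.neighborFinset p = {r, l} := by
    ext z
    rw [SimpleGraph.mem_neighborFinset, Finset.mem_insert, Finset.mem_singleton]
    constructor
    · intro h
      rw [hT2adj] at h
      rcases h with ⟨hTz, hnot⟩ | ⟨he, hne⟩
      · rcases (hnf z).1 hTz with e | e | e
        · exact Or.inr e
        · exact absurd (Or.inl (by rw [e])) hnot
        · exact absurd (Or.inr (by rw [e])) hnot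
      · rcases he with he | he <;> rw [Sym2.eq_iff] at he <;>
          rcases he with ⟨e1, e2⟩ | ⟨e1, e2⟩
        · exact absurd e1 (Ne.symm hqp)
        · exact absurd e1 (Ne.symm hcp)
        · exact Or.inl e2
        · exact absurd e1 hpr
    · rintro (rfl | rfl)
      · exact hT'pr
      · exact hT'pl
  have hdeg2p : T2.degree p = 2 := by
    rw [← SimpleGraph.card_neighborFinset_eq_degree, hT2nfp]
    rw [Finset.card_insert_of_notMem (by simpa using hlr.symm), Finset.card_singleton]
  have hnf_other : ∀ w, w ≠ p → w ≠ q → w ≠ c → w ≠ r →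
      T2.neighborFinset w = T.neighborFinset w := by
    intro w hwp hwq hwc hwr
    ext z
    rw [SimpleGraph.mem_neighborFinset, SimpleGraph.mem_neighborFinset]
    constructor
    · intro h
      rw [hT2adj] at h
      rcases h with ⟨hTz, _⟩ | ⟨he, hne⟩
      · exact hTz
      · exfalso
        rcases he with he | he <;> rw [Sym2.eq_iff] at he <;>
          rcases he with ⟨e1, e2⟩ | ⟨e1, e2⟩
        · exact hwq e1
        · exact hwc e1
        · exact hwp e1
        · exact hwr e1
    · intro h
      by_cases hz : z = p
      · subst hz
        have : w = l := by
          rcases (hnf w).1 h.symm with e | e | e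
          · exact e
          · exact absurd e hwq
          · exact absurd e hwc
        subst this
        exact hT'pl.symm
      · exact hT'1 w z h hwp hz
  -- degree of r in T2 is 3
  have hdeg2r : T2.degree r = 3 := by
    by_cases hqr : q = r
    · -- q = r : neighborhood of r gains c
      have hnf2r : T2.neighborFinset r = insert c (T.neighborFinset r) := by
        ext z
        rw [SimpleGraph.mem_neighborFinset, Finset.mem_insert,
          SimpleGraph.mem_neighborFinset]
        constructor
        · intro h
          rw [hT2adj] at h
          rcases h with ⟨hTz, _⟩ | ⟨he, hne⟩
          · exact Or.inr hTz
          · rcases he with he | he <;> rw [Sym2.eq_iff] at he <;>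
              rcases he with ⟨e1, e2⟩ | ⟨e1, e2⟩
            · exact Or.inl e2
            · exact absurd e1.symm hcr
            · exact absurd e1 hpr.symm
            · exact Or.inr (by rw [e2]; exact (hqr ▸ hpq).symm)
        · rintro (rfl | h)
          · exact (hqr ▸ hT'qc).symm.symm
          · by_cases hz : z = p
            · subst hz; exact hT'pr.symm
            · exact hT'1 r z h (hpr.symm) hz
      rw [← SimpleGraph.card_neighborFinset_eq_degree, hnf2r,
        Finset.card_insert_of_notMem (by
          rw [SimpleGraph.mem_neighborFinset]
          intro hcadj
          apply hqc_nadj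
          rw [hqr]
          exact hcadj),
        SimpleGraph.card_neighborFinset_eq_degree, hdegr]
    · -- q ≠ r : neighborhood of r gains p
      have hnf2r : T2.neighborFinset r = insert p (T.neighborFinset r) := by
        ext z
        rw [SimpleGraph.mem_neighborFinset, Finset.mem_insert,
          SimpleGraph.mem_neighborFinset]
        constructor
        · intro h
          rw [hT2adj] at h
          rcases h with ⟨hTz, _⟩ | ⟨he, hne⟩
          · exact Or.inr hTz
          · rcases he with he | he <;> rw [Sym2.eq_iff] at he <;>
              rcases he with ⟨e1, e2⟩ | ⟨e1, e2⟩
            · exact absurd e1 (fun e => hqr e.symm)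
            · exact absurd e1 (fun e => hcr e.symm)
            · exact absurd e1 hpr.symm
            · exact Or.inl e2
        · rintro (rfl | h)
          · exact hT'pr.symm
          · have hz : z ≠ p := by
              intro e
              exact hpr_nadj hqr (e ▸ h).symm
            exact hT'1 r z h hpr.symm hz
      rw [← SimpleGraph.card_neighborFinset_eq_degree, hnf2r,
        Finset.card_insert_of_notMem (by
          rw [SimpleGraph.mem_neighborFinset]
          intro hpadj
          exact hpr_nadj hqr hpadj.symm),
        SimpleGraph.card_neighborFinset_eq_degree, hdegr]
  -- degree of q preserved (when q ≠ r)
  have hdeg2q : q ≠ r → T2.degree q = T.degree q := by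
    intro hqr
    have hnf2q : T2.neighborFinset q = insert c ((T.neighborFinset q).erase p) := by
      ext z
      rw [SimpleGraph.mem_neighborFinset, Finset.mem_insert, Finset.mem_erase,
        SimpleGraph.mem_neighborFinset]
      constructor
      · intro h
        rw [hT2adj] at h
        rcases h with ⟨hTz, hnot⟩ | ⟨he, hne⟩
        · right
          refine ⟨?_, hTz⟩
          intro e
          exact hnot (Or.inl (by rw [e]; exact Sym2.eq_swap))
        · rcases he with he | he <;> rw [Sym2.eq_iff] at he <;>
            rcases he with ⟨e1, e2⟩ | ⟨e1, e2⟩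
          · exact Or.inl e2
          · exact absurd e1 (Ne.symm hcq)
          · exact absurd e1 hqp
          · exact absurd e1 hqr
      · rintro (rfl | ⟨hz, h⟩)
        · exact hT'qc
        · exact hT'1 q z h hqp hz
    rw [← SimpleGraph.card_neighborFinset_eq_degree, hnf2q,
      Finset.card_insert_of_notMem (by
        rw [Finset.mem_erase, SimpleGraph.mem_neighborFinset]
        rintro ⟨-, hcadj⟩
        exact hqc_nadj hcadj),
      Finset.card_erase_of_mem (by
        rw [SimpleGraph.mem_neighborFinset]; exact hpq.symm),
      SimpleGraph.card_neighborFinset_eq_degree]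
    have : 1 ≤ T.degree q := by
      rw [← SimpleGraph.card_neighborFinset_eq_degree]
      exact Finset.card_pos.2 ⟨p, by rw [SimpleGraph.mem_neighborFinset]; exact hpq.symm⟩
    omega
  -- degree of c preserved
  have hdeg2c : T2.degree c = T.degree c := by
    have hnf2c : T2.neighborFinset c = insert q ((T.neighborFinset c).erase p) := by
      ext z
      rw [SimpleGraph.mem_neighborFinset, Finset.mem_insert, Finset.mem_erase,
        SimpleGraph.mem_neighborFinset]
      constructor
      · intro h
        rw [hT2adj] at h
        rcases h with ⟨hTz, hnot⟩ | ⟨he, hne⟩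
        · right
          refine ⟨?_, hTz⟩
          intro e
          exact hnot (Or.inr (by rw [e]; exact Sym2.eq_swap))
        · rcases he with he | he <;> rw [Sym2.eq_iff] at he <;>
            rcases he with ⟨e1, e2⟩ | ⟨e1, e2⟩
          · exact absurd e1 hcq
          · exact Or.inl e2
          · exact absurd e1 hcp
          · exact absurd e1 hcr
      · rintro (rfl | ⟨hz, h⟩)
        · exact hT'qc.symm
        · exact hT'1 c z h hcp hz
    rw [← SimpleGraph.card_neighborFinset_eq_degree, hnf2c,
      Finset.card_insert_of_notMem (by
        rw [Finset.mem_erase, SimpleGraph.mem_neighborFinset]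
        rintro ⟨-, hqadj⟩
        exact hqc_nadj hqadj.symm),
      Finset.card_erase_of_mem (by
        rw [SimpleGraph.mem_neighborFinset]; exact hpc.symm),
      SimpleGraph.card_neighborFinset_eq_degree]
    have : 1 ≤ T.degree c := by
      rw [← SimpleGraph.card_neighborFinset_eq_degree]
      exact Finset.card_pos.2 ⟨p, by rw [SimpleGraph.mem_neighborFinset]; exact hpc.symm⟩
    omega
  -- all degrees other than p, r are preserved
  have hdeg_pres : ∀ w, w ≠ p → w ≠ r → T2.degree w = T.degree w := by
    intro w hwp hwr
    by_cases hwq : w = q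
    · subst hwq; exact hdeg2q (fun e => hwr e)
    by_cases hwc : w = c
    · subst hwc; exact hdeg2c
    rw [← SimpleGraph.card_neighborFinset_eq_degree, hnf_other w hwp hwq hwc hwr,
      SimpleGraph.card_neighborFinset_eq_degree]
  -- leaf sets coincide
  have hleaf_eq : ∀ w, T2.degree w = 1 ↔ T.degree w = 1 := by
    intro w
    by_cases hwp : w = p
    · subst hwp; rw [hdeg2p, hdegp]; omega
    by_cases hwr : w = r
    · subst hwr; rw [hdeg2r, hdegr]; omega
    rw [hdeg_pres w hwp hwr]
  -- T2 is connected
  have hc_adjpc := hpc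
  have hreach_r : ∀ x, T2.Reachable x r := by
    intro x
    by_cases hxp : x = p
    · subst hxp; exact hT'pr.reachable
    by_cases hxl : x = l
    · subst hxl; exact (hT'pl.symm.reachable).trans hT'pr.reachable
    obtain ⟨Wk, _⟩ := IsoLeaf.shortest_walk hc x r
    obtain ⟨Wk', _, _⟩ := IsoLeaf.walk_surgery p l q c hnf hlnf hT'1 hT'qc hql hcl
      Wk.length Wk rfl hxp hxl hpr.symm hlr.symm
    exact ⟨Wk'⟩
  have hconn2 : T2.Connected := by
    rw [SimpleGraph.connected_iff]
    exact ⟨fun a b => (hreach_r a).trans (hreach_r b).symm, ⟨p⟩⟩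
  -- edge count preserved via handshake
  have hsum_eq : ∑ w, T2.degree w = ∑ w, T.degree w := by
    have hsub : ({p, r} : Finset _) ⊆ Finset.univ := Finset.subset_univ _
    have e1 : ∑ w ∈ Finset.univ \ {p, r}, T2.degree w + ∑ w ∈ ({p, r} : Finset _), T2.degree w
        = ∑ w, T2.degree w := Finset.sum_sdiff hsub
    have e2 : ∑ w ∈ Finset.univ \ {p, r}, T.degree w + ∑ w ∈ ({p, r} : Finset _), T.degree w
        = ∑ w, T.degree w := Finset.sum_sdiff hsub
    have e3 : ∑ w ∈ Finset.univ \ {p, r}, T2.degree w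
        = ∑ w ∈ Finset.univ \ {p, r}, T.degree w := by
      apply Finset.sum_congr rfl
      intro w hw
      rw [Finset.mem_sdiff, Finset.mem_insert, Finset.mem_singleton] at hw
      push_neg at hw
      exact hdeg_pres w hw.2.1 hw.2.2
    have e4 : ∑ w ∈ ({p, r} : Finset _), T2.degree w = 5 := by
      rw [Finset.sum_pair hpr, hdeg2p, hdeg2r]
    have e5 : ∑ w ∈ ({p, r} : Finset _), T.degree w = 5 := by
      rw [Finset.sum_pair hpr, hdegp, hdegr]
    omega
  have hEcard : T2.edgeFinset.card = T.edgeFinset.card := by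
    have h1 := SimpleGraph.sum_degrees_eq_twice_card_edges T2
    have h2 := SimpleGraph.sum_degrees_eq_twice_card_edges T
    omega
  have htree2 : T2.IsTree := by
    apply IsoLeaf.isTree_of_card hconn2
    rw [hEcard]
    exact hT.card_edgeFinset
  -- T2 is a rooted binary layout with root p
  have hlayout2 : IsRootedBinaryLayout T2 p φ := by
    refine ⟨htree2, hdeg2p, ?_, ?_⟩
    · intro w hwp
      by_cases hwr : w = r
      · subst hwr; right; exact hdeg2r
      rw [hdeg_pres w hwp hwr]
      exact hdegs w hwr
    · have hset : {w | T2.degree w = 1} = {w | T.degree w = 1} := Set.ext hleaf_eq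
      rw [hset]
      exact hbij
  -- facts about images of φ
  have hφleaf : ∀ v : Option V, T.degree (φ v) = 1 := fun v => hbij.mapsTo (Set.mem_univ v)
  have hφp : ∀ v : Option V, φ v ≠ p := by
    intro v e
    have := hφleaf v
    rw [e, hdegp] at this
    omega
  have hφl : ∀ x : V, φ (some x) ≠ l := by
    intro x e
    have := hbij.injOn (Set.mem_univ (some x)) (Set.mem_univ none) (e.trans hl)
    exact Option.some_ne_none x this
  -- distances never increase, and drop when the shortest walk passes p
  have key : ∀ a b, a ≠ p → a ≠ l → b ≠ p → b ≠ l →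
      T2.dist a b ≤ T.dist a b ∧
      (∀ Wk : T.Walk a b, Wk.length = T.dist a b → p ∈ Wk.support →
        T2.dist a b < T.dist a b) := by
    intro a b hap hal hbp hbl
    constructor
    · obtain ⟨Wk, hWk⟩ := IsoLeaf.shortest_walk hc a b
      obtain ⟨Wk', hle, _⟩ := IsoLeaf.walk_surgery p l q c hnf hlnf hT'1 hT'qc hql hcl
        Wk.length Wk rfl hap hal hbp hbl
      calc T2.dist a b ≤ Wk'.length := SimpleGraph.dist_le Wk'
        _ ≤ Wk.length := hle
        _ = T.dist a b := hWk
    · intro Wk hWk hpmem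
      obtain ⟨Wk', _, hstrict⟩ := IsoLeaf.walk_surgery p l q c hnf hlnf hT'1 hT'qc hql hcl
        Wk.length Wk rfl hap hal hbp hbl
      calc T2.dist a b ≤ Wk'.length := SimpleGraph.dist_le Wk'
        _ < Wk.length := hstrict hpmem
        _ = T.dist a b := hWk
  -- degrees are 1 or ≥ 2 in T
  have hdeg12 : ∀ w, T.degree w ≠ 1 → 2 ≤ T.degree w := by
    intro w h1
    by_cases hwr : w = r
    · subst hwr; omega
    rcases hdegs w hwr with h | h
    · exact absurd h h1
    · omega
  -- the side predicate
  set S : V → Prop := fun x =>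
    T.dist (φ (some x)) r = T.dist (φ (some x)) p + T.dist p r with hSdef
  -- a leaf beyond c is in S
  obtain ⟨u₀, hu₀deg, hu₀d⟩ := IsoLeaf.exists_leaf_dir hT hdeg12 hpc
  have hu₀l : u₀ ≠ l := by
    intro e
    rw [e, SimpleGraph.dist_eq_one_iff_adj.2 hlp.symm] at hu₀d
    have : T.dist c l = 0 := by omega
    exact hcl (hc.dist_eq_zero_iff.1 this)
  obtain ⟨x₀, -, hx₀⟩ := hbij.surjOn (show u₀ ∈ {w | T.degree w = 1} from hu₀deg)
  have hx₀some : ∃ x : V, φ (some x) = u₀ := by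
    cases x₀ with
    | none => exact absurd (hl.trans hx₀).symm hu₀l
    | some x => exact ⟨x, hx₀⟩
  obtain ⟨x₀', hx₀'⟩ := hx₀some
  have hSx₀ : S x₀' := by
    rw [hSdef]
    simp only
    rw [hx₀']
    obtain ⟨Wk, hWk⟩ := IsoLeaf.shortest_walk hc u₀ r
    by_cases hpW : p ∈ Wk.support
    · have hle := IsoLeaf.dist_add_dist_le_length Wk hpW
      have htri : T.dist u₀ r ≤ T.dist u₀ p + T.dist p r := hc.dist_triangle
      omega
    · exfalso
      have hdir : T.dist p u₀ = 1 + T.dist c u₀ := hu₀d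
      have := IsoLeaf.dir_walk hT Wk hpW hpc hdir
      exact hcq (IsoLeaf.dir_unique hT hpc hpq this hdq)
  -- a leaf beyond q is not in S
  obtain ⟨u₁, hu₁deg, hu₁d⟩ := IsoLeaf.exists_leaf_dir hT hdeg12 hpq
  have hu₁l : u₁ ≠ l := by
    intro e
    rw [e, SimpleGraph.dist_eq_one_iff_adj.2 hlp.symm] at hu₁d
    have : T.dist q l = 0 := by omega
    exact hql (hc.dist_eq_zero_iff.1 this)
  obtain ⟨y₀, -, hy₀⟩ := hbij.surjOn (show u₁ ∈ {w | T.degree w = 1} from hu₁deg)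
  have hy₀some : ∃ y : V, φ (some y) = u₁ := by
    cases y₀ with
    | none => exact absurd (hl.trans hy₀).symm hu₁l
    | some y => exact ⟨y, hy₀⟩
  obtain ⟨y₀', hy₀'⟩ := hy₀some
  have hSy₀ : ¬ S y₀' := by
    rw [hSdef]
    simp only
    rw [hy₀']
    intro hcon
    have hcm1 : T.dist u₁ p = T.dist p u₁ := SimpleGraph.dist_comm ..
    have hcm2 : T.dist u₁ q = T.dist q u₁ := SimpleGraph.dist_comm ..
    have htri : T.dist u₁ r ≤ T.dist u₁ q + T.dist q r := hc.dist_triangle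
    omega
  -- a crossing edge of G
  have hcross : ∃ u v : V, G.Adj u v ∧ S u ∧ ¬ S v := by
    have haux : ∀ (a b : V) (Wab : G.Walk a b), S a → ¬ S b →
        ∃ u v : V, G.Adj u v ∧ S u ∧ ¬ S v := by
      intro a b Wab
      induction Wab with
      | nil => intro h1 h2; exact absurd h1 h2
      | @cons a' z' b' h W ih =>
        intro h1 h2
        by_cases hz : S z'
        · exact ih hz h2
        · exact ⟨a', z', h, h1, hz⟩
    obtain ⟨WG⟩ := hG.preconnected x₀' y₀'
    exact haux x₀' y₀' WG hSx₀ hSy₀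
  obtain ⟨u, v, huv, hSu, hSv⟩ := hcross
  -- every T-walk between the images of u and v passes through p
  have hall : ∀ Wk : T.Walk (φ (some u)) (φ (some v)), p ∈ Wk.support := by
    intro Wk
    by_contra hpW
    -- direction of φ (some u) from p
    obtain ⟨n, hn, hdn⟩ := IsoLeaf.dir_exists hc (Ne.symm (hφp (some u)))
    have hnq : n ≠ q := by
      intro e
      subst e
      simp only [hSdef] at hSu
      have hcm : T.dist (φ (some u)) p = T.dist p (φ (some u)) := SimpleGraph.dist_comm ..
      have hcm2 : T.dist (φ (some u)) n = T.dist n (φ (some u)) := SimpleGraph.dist_comm ..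
      have htri : T.dist (φ (some u)) r ≤ T.dist (φ (some u)) n + T.dist n r :=
        hc.dist_triangle
      omega
    have hdnv : T.dist p (φ (some v)) = 1 + T.dist n (φ (some v)) :=
      IsoLeaf.dir_walk hT Wk hpW hn hdn
    -- then v would be in S, contradiction
    apply hSv
    rw [hSdef]
    simp only
    obtain ⟨Wk₂, hWk₂⟩ := IsoLeaf.shortest_walk hc (φ (some v)) r
    by_cases hpW₂ : p ∈ Wk₂.support
    · have hle := IsoLeaf.dist_add_dist_le_length Wk₂ hpW₂
      have htri : T.dist (φ (some v)) r ≤ T.dist (φ (some v)) p + T.dist p r :=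
        hc.dist_triangle
      omega
    · exfalso
      have := IsoLeaf.dir_walk hT Wk₂ hpW₂ hn hdnv
      exact hnq (IsoLeaf.dir_unique hT hn hpq this hdq)
  -- the strict inequality for the crossing edge
  have hstrict_uv : T2.dist (φ (some u)) (φ (some v)) < T.dist (φ (some u)) (φ (some v)) := by
    obtain ⟨Wk, hWk⟩ := IsoLeaf.shortest_walk hc (φ (some u)) (φ (some v))
    exact (key _ _ (hφp _) (hφl u) (hφp _) (hφl v)).2 Wk hWk (hall Wk)
  -- compare total tree lengths
  have hsumlt : treeLength (addIsolated G) T2 φ < treeLength (addIsolated G) T φ := by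
    unfold treeLength
    apply Finset.sum_lt_sum
    · intro e he
      induction e with
      | _ a b =>
        rw [SimpleGraph.mem_edgeFinset, SimpleGraph.mem_edgeSet] at he
        rw [addIsolated, SimpleGraph.fromRel_adj] at he
        obtain ⟨-, hrel⟩ := he
        rcases hrel with ⟨x, y, rfl, rfl, -⟩ | ⟨x, y, rfl, rfl, -⟩ <;>
        · simp only [Sym2.lift_mk]
          exact (key _ _ (hφp _) (hφl _) (hφp _) (hφl _)).1
    · refine ⟨s(some u, some v), ?_, ?_⟩
      · rw [SimpleGraph.mem_edgeFinset, SimpleGraph.mem_edgeSet]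
        rw [addIsolated, SimpleGraph.fromRel_adj]
        constructor
        · intro hcon
          exact huv.ne (Option.some_injective V hcon)
        · exact Or.inl ⟨u, v, rfl, rfl, huv⟩
      · simp only [Sym2.lift_mk]
        exact hstrict_uv
  have hge := hmin T2 p φ hlayout2
  omega
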